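/- Let a_0, a_1, a_2, a_3 be binary sequences of odd length n, let e(0), e(1), e(2) ∈ {0,1}, and let u be the quaternary sequence of length N = 2n generated by Construction I. Suppose that: (i) R_{a_0}(τ_0)+R_{a_1}(τ_0)+R_{a_2}(τ_0)+R_{a_3}(τ_0) ∈ {0, 4, −4} for all 1 ≤ τ_0 < n; (ii) R_{a_0,a_2}(τ_0) − R_{a_2,a_0}(τ_0) + (−1)^{e(0)+e(1)+e(2)}(R_{a_1,a_3}(τ_0) − R_{a_3,a_1}(τ_0)) = 0 for all 1 ≤ τ_0 < n; (iii) R_{a_0,a_1}(τ_0) + R_{a_1,a_0}(τ_0) + (−1)^{e(0)+e(1)+e(2)}(R_{a_2,a_3}(τ_0) + R_{a_3,a_2}(τ_0)) ∈ {0, 4, −4} for all 0 ≤ τ_0 < n; and (iv) R_{a_0,a_3}(τ_0) − R_{a_3,a_0}(τ_0) + (−1)^{e(0)+e(1)+e(2)}(R_{a_1,a_2}(τ_0) − R_{a_2,a_1}(τ_0)) = 0 for all 0 ≤ τ_0 < n. Then R_u(τ) ∈ {0, 2, −2} for all 1 ≤ τ < N. -/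

import Mathlib

/-- Cross-correlation of two sequences of length `N` over `ℤ_H`, with `ξ = exp(2πi/H)`. -/
noncomputable def crossCorr (H N : ℕ) (s t : ZMod N → ZMod H) (τ : ZMod N) : ℂ :=
  ∑ i ∈ Finset.range N,
    Complex.exp (2 * (Real.pi : ℂ) * Complex.I / (H : ℂ)) ^ ((s (i : ZMod N) - t ((i : ZMod N) + τ)).val)

/-- Cross-correlation of two binary sequences of length `N` (an integer). -/
def binCorr (N : ℕ) (s t : ZMod N → ZMod 2) (τ : ZMod N) : ℤ :=
  ∑ i ∈ Finset.range N, (-1 : ℤ) ^ ((s (i : ZMod N) + t ((i : ZMod N) + τ)).val)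

/-- Cross-correlation of two quaternary sequences of length `N`, with `ξ = √-1`. -/
noncomputable def quadCorr (N : ℕ) (s t : ZMod N → ZMod 4) (τ : ZMod N) : ℂ :=
  ∑ i ∈ Finset.range N, Complex.I ^ ((s (i : ZMod N) - t ((i : ZMod N) + τ)).val)

/-- Interleaving `u = I(a, b)`: `u(2i) = a(i)`, `u(2i+1) = b(i)`. -/
def interleaveSeq {H : ℕ} (n : ℕ) (a b : ZMod n → ZMod H) : ZMod (2 * n) → ZMod H :=
  fun k => if k.val % 2 = 0 then a ((k.val / 2 : ℕ) : ZMod n) else b ((k.val / 2 : ℕ) : ZMod n)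

/-- The inverse Gray mapping `φ⁻¹ : ℤ₂ × ℤ₂ → ℤ₄`. -/
def grayInv (a b : ZMod 2) : ZMod 4 :=
  if a = 0 then (if b = 0 then 0 else 1) else (if b = 0 then 3 else 2)

/-- Construction I: the quaternary sequence of length `2n` built from
`a₀, a₁, a₂, a₃` and bits `e₀, e₁, e₂`. -/
def constructionI (n : ℕ) (a0 a1 a2 a3 : ZMod n → ZMod 2)
    (e0 e1 e2 : ZMod 2) : ZMod (2 * n) → ZMod 4 :=
  let lam : ZMod n := (((n + 1) / 2 : ℕ) : ZMod n)
  let c := interleaveSeq n a0 (fun i => e0 + a1 (i + lam))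
  let d := interleaveSeq n (fun i => e1 + a2 i) (fun i => e2 + a3 (i + lam))
  fun i => grayInv (c i) (d i)



section Aux

lemma gray_pow (x y x' y' : ZMod 2) :
    (Complex.I) ^ ((grayInv x y - grayInv x' y').val) =
      (((-1:ℂ)^((x+x').val) + (-1:ℂ)^((y+y').val)) +
        Complex.I * ((-1:ℂ)^((x+y').val) - (-1:ℂ)^((y+x').val)))/2 := by
  have i2 : (Complex.I)^2 = -1 := Complex.I_sq
  have i3 : (Complex.I)^3 = -Complex.I := by rw [pow_succ, i2]; ring
  have h01 : ∀ z : ZMod 2, z = 0 ∨ z = 1 := by decide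
  rcases h01 x with rfl | rfl <;> rcases h01 y with rfl | rfl <;>
    rcases h01 x' with rfl | rfl <;> rcases h01 y' with rfl | rfl <;>
    norm_num [grayInv, show ((1:ZMod 2)).val = 1 from rfl, show ((2:ZMod 2)).val = 0 from rfl,
      show ((1:ZMod 4)).val = 1 from rfl, show ((2:ZMod 4)).val = 2 from rfl,
      show ((3:ZMod 4)).val = 3 from rfl, show ((-1:ZMod 4)).val = 3 from rfl,
      show ((-2:ZMod 4)).val = 2 from rfl, show ((-3:ZMod 4)).val = 1 from rfl, i2, i3] <;>
    ring

lemma quadCorr_decomp {N : ℕ} (c d : ZMod N → ZMod 2) (τ : ZMod N) :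
    quadCorr N (fun i => grayInv (c i) (d i)) (fun i => grayInv (c i) (d i)) τ =
      (((binCorr N c c τ + binCorr N d d τ : ℤ) : ℂ)
        + Complex.I * ((binCorr N c d τ - binCorr N d c τ : ℤ) : ℂ)) / 2 := by
  unfold quadCorr binCorr
  push_cast
  simp only [gray_pow]
  rw [← Finset.sum_div]
  congr 1
  rw [Finset.sum_add_distrib, Finset.sum_add_distrib, ← Finset.mul_sum,
    Finset.sum_sub_distrib]

lemma sign_id02 (e0 e1 e2 : ZMod 2) :
    (-1:ℤ)^e0.val * (-1:ℤ)^e2.val = (-1:ℤ)^e1.val * (-1:ℤ)^((e0+e1+e2).val) := by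
  fin_cases e0 <;> fin_cases e1 <;> fin_cases e2 <;> rfl

lemma sign_id12 (e0 e1 e2 : ZMod 2) :
    (-1:ℤ)^e1.val * (-1:ℤ)^e2.val = (-1:ℤ)^e0.val * (-1:ℤ)^((e0+e1+e2).val) := by
  fin_cases e0 <;> fin_cases e1 <;> fin_cases e2 <;> rfl

lemma sign_id01 (e0 e1 e2 : ZMod 2) :
    (-1:ℤ)^e0.val * (-1:ℤ)^e1.val = (-1:ℤ)^e2.val * (-1:ℤ)^((e0+e1+e2).val) := by
  fin_cases e0 <;> fin_cases e1 <;> fin_cases e2 <;> rfl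

lemma neg_one_sq' (v : ℕ) : (-1:ℤ)^v * (-1:ℤ)^v = 1 := by
  rw [← pow_add]; exact Even.neg_one_pow ⟨v, rfl⟩

lemma final_mem (A B : ℤ) (hA : A ∈ ({0,4,-4} : Set ℤ)) (hB : B = 0) :
    (((A : ℤ) : ℂ) + Complex.I * ((B : ℤ) : ℂ))/2 ∈ ({0,2,-2} : Set ℂ) := by
  subst hB
  simp only [Set.mem_insert_iff, Set.mem_singleton_iff] at hA ⊢
  rcases hA with h|h|h <;> rw [h] <;> norm_num

lemma mem_flip (v : ℕ) (K : ℤ) (hK : K ∈ ({0,4,-4} : Set ℤ)) :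
    (-1:ℤ)^v * K ∈ ({0,4,-4} : Set ℤ) := by
  simp only [Set.mem_insert_iff, Set.mem_singleton_iff] at hK ⊢
  rcases neg_one_pow_eq_or ℤ v with h|h <;> rcases hK with hk|hk|hk <;>
    rw [h, hk] <;> norm_num

lemma sum_range_double {M : Type*} [AddCommMonoid M] (n : ℕ) (f : ℕ → M) :
    ∑ i ∈ Finset.range (2 * n), f i = ∑ j ∈ Finset.range n, (f (2 * j) + f (2 * j + 1)) := by
  induction n with
  | zero => simp
  | succ m ih =>
      rw [Nat.mul_succ, Finset.sum_range_succ, Finset.sum_range_succ, Finset.sum_range_succ, ← ih]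
      ring_nf
      rw [add_assoc]

lemma interleave_eval {H n : ℕ} [NeZero n] (a b : ZMod n → ZMod H) (m : ℕ) :
    interleaveSeq n a b ((m : ℕ) : ZMod (2 * n)) =
      if m % 2 = 0 then a ((m / 2 : ℕ) : ZMod n) else b ((m / 2 : ℕ) : ZMod n) := by
  have hn : 0 < n := Nat.pos_of_ne_zero (NeZero.ne n)
  have h2n : NeZero (2 * n) := ⟨by positivity⟩
  have hval : ((m : ZMod (2 * n))).val = m % (2 * n) := ZMod.val_natCast (2 * n) m
  have hmod : m % (2 * n) % 2 = m % 2 := Nat.mod_mod_of_dvd m ⟨n, rfl⟩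
  have hdiv' : (((m % (2 * n)) / 2 : ℕ) : ZMod n) = ((m / 2 : ℕ) : ZMod n) := by
    have h : 2 * (n * (m / (2 * n))) + m % (2 * n) = m := by
      rw [← Nat.mul_assoc]; exact Nat.div_add_mod m (2 * n)
    have key : m / 2 = (m % (2 * n)) / 2 + n * (m / (2 * n)) := by omega
    rw [key]; push_cast [ZMod.natCast_self]; ring
  unfold interleaveSeq
  rw [hval, hmod, hdiv']

lemma sum_range_zmod {n : ℕ} [NeZero n] (f : ZMod n → ℤ) :
    ∑ i ∈ Finset.range n, f ((i : ℕ) : ZMod n) = ∑ x : ZMod n, f x := by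
  apply Finset.sum_nbij' (i := fun i => ((i : ℕ) : ZMod n)) (j := fun x => x.val)
  · intro i _; exact Finset.mem_univ _
  · intro x _; exact Finset.mem_range.2 (ZMod.val_lt x)
  · intro i hi; exact ZMod.val_natCast_of_lt (Finset.mem_range.1 hi)
  · intro x _; exact ZMod.natCast_rightInverse x
  · intro i _; rfl

lemma binCorr_eq_univ {n : ℕ} [NeZero n] (s t : ZMod n → ZMod 2) (τ : ZMod n) :
    binCorr n s t τ = ∑ x : ZMod n, (-1 : ℤ) ^ ((s x + t (x + τ)).val) := by
  unfold binCorr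
  exact sum_range_zmod fun x => (-1 : ℤ) ^ ((s x + t (x + τ)).val)

lemma neg_one_val_add (e x : ZMod 2) :
    (-1 : ℤ) ^ ((e + x).val) = (-1 : ℤ) ^ e.val * (-1 : ℤ) ^ x.val := by
  fin_cases e <;> fin_cases x <;> rfl

lemma binCorr_const_left {n : ℕ} (e : ZMod 2) (p q : ZMod n → ZMod 2) (τ : ZMod n) :
    binCorr n (fun i => e + p i) q τ = (-1 : ℤ) ^ e.val * binCorr n p q τ := by
  unfold binCorr
  rw [Finset.mul_sum]
  refine Finset.sum_congr rfl fun i _ => ?_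
  show (-1 : ℤ) ^ ((e + p i + q ((i : ZMod n) + τ)).val) = _
  rw [add_assoc, neg_one_val_add]

lemma binCorr_const_right {n : ℕ} (f : ZMod 2) (p q : ZMod n → ZMod 2) (τ : ZMod n) :
    binCorr n p (fun i => f + q i) τ = (-1 : ℤ) ^ f.val * binCorr n p q τ := by
  unfold binCorr
  rw [Finset.mul_sum]
  refine Finset.sum_congr rfl fun i _ => ?_
  show (-1 : ℤ) ^ ((p i + (f + q ((i : ZMod n) + τ))).val) = _
  have h : p i + (f + q ((i : ZMod n) + τ)) = f + (p i + q ((i : ZMod n) + τ)) := by ring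
  rw [h, neg_one_val_add]

lemma binCorr_shift_right {n : ℕ} (p q : ZMod n → ZMod 2) (μ τ : ZMod n) :
    binCorr n p (fun i => q (i + μ)) τ = binCorr n p q (τ + μ) := by
  unfold binCorr
  refine Finset.sum_congr rfl fun i _ => ?_
  show (-1 : ℤ) ^ ((p i + q ((i : ZMod n) + τ + μ)).val) = _
  rw [add_assoc]

lemma binCorr_shift_left {n : ℕ} [NeZero n] (p q : ZMod n → ZMod 2) (μ τ : ZMod n) :
    binCorr n (fun i => p (i + μ)) q τ = binCorr n p q (τ - μ) := by
  rw [binCorr_eq_univ, binCorr_eq_univ]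
  refine Fintype.sum_equiv (Equiv.addRight μ) _ _ fun x => ?_
  show (-1 : ℤ) ^ ((p (x + μ) + q (x + τ)).val)
      = (-1 : ℤ) ^ ((p (x + μ) + q (x + μ + (τ - μ))).val)
  have h : x + τ = x + μ + (τ - μ) := by ring
  rw [h]

lemma binCorr_interleave_even {n : ℕ} [NeZero n] (p q r w : ZMod n → ZMod 2) (τ0 : ℕ) :
    binCorr (2 * n) (interleaveSeq n p q) (interleaveSeq n r w) ((2 * τ0 : ℕ) : ZMod (2 * n)) =
      binCorr n p r ((τ0 : ℕ) : ZMod n) + binCorr n q w ((τ0 : ℕ) : ZMod n) := by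
  unfold binCorr
  rw [sum_range_double, ← Finset.sum_add_distrib]
  refine Finset.sum_congr rfl fun j hj => ?_
  have key1 : ((2 * j : ℕ) : ZMod (2 * n)) + ((2 * τ0 : ℕ) : ZMod (2 * n))
      = ((2 * (j + τ0) : ℕ) : ZMod (2 * n)) := by push_cast; ring
  have key2 : ((2 * j + 1 : ℕ) : ZMod (2 * n)) + ((2 * τ0 : ℕ) : ZMod (2 * n))
      = ((2 * (j + τ0) + 1 : ℕ) : ZMod (2 * n)) := by push_cast; ring
  rw [key1, key2, interleave_eval, interleave_eval, interleave_eval, interleave_eval]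
  have e1 : (2 * j) % 2 = 0 := by omega
  have e2 : (2 * (j + τ0)) % 2 = 0 := by omega
  have e3 : (2 * j + 1) % 2 = 1 := by omega
  have e4 : (2 * (j + τ0) + 1) % 2 = 1 := by omega
  have d1 : (2 * j) / 2 = j := by omega
  have d2 : (2 * (j + τ0)) / 2 = j + τ0 := by omega
  have d3 : (2 * j + 1) / 2 = j := by omega
  have d4 : (2 * (j + τ0) + 1) / 2 = j + τ0 := by omega
  rw [e1, e2, e3, e4, d1, d2, d3, d4]
  norm_num

lemma binCorr_interleave_odd {n : ℕ} [NeZero n] (p q r w : ZMod n → ZMod 2) (τ0 : ℕ) :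
    binCorr (2 * n) (interleaveSeq n p q) (interleaveSeq n r w)
        ((2 * τ0 + 1 : ℕ) : ZMod (2 * n)) =
      binCorr n p w ((τ0 : ℕ) : ZMod n) + binCorr n q r ((τ0 + 1 : ℕ) : ZMod n) := by
  unfold binCorr
  rw [sum_range_double, ← Finset.sum_add_distrib]
  refine Finset.sum_congr rfl fun j hj => ?_
  have key1 : ((2 * j : ℕ) : ZMod (2 * n)) + ((2 * τ0 + 1 : ℕ) : ZMod (2 * n))
      = ((2 * (j + τ0) + 1 : ℕ) : ZMod (2 * n)) := by push_cast; ring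
  have key2 : ((2 * j + 1 : ℕ) : ZMod (2 * n)) + ((2 * τ0 + 1 : ℕ) : ZMod (2 * n))
      = ((2 * (j + τ0 + 1) : ℕ) : ZMod (2 * n)) := by push_cast; ring
  rw [key1, key2, interleave_eval, interleave_eval, interleave_eval, interleave_eval]
  have e1 : (2 * j) % 2 = 0 := by omega
  have e2 : (2 * (j + τ0) + 1) % 2 = 1 := by omega
  have e3 : (2 * j + 1) % 2 = 1 := by omega
  have e4 : (2 * (j + τ0 + 1)) % 2 = 0 := by omega
  have d1 : (2 * j) / 2 = j := by omega
  have d2 : (2 * (j + τ0) + 1) / 2 = j + τ0 := by omega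
  have d3 : (2 * j + 1) / 2 = j := by omega
  have d4 : (2 * (j + τ0 + 1)) / 2 = j + τ0 + 1 := by omega
  rw [e1, e2, e3, e4, d1, d2, d3, d4]
  norm_num
  ring_nf

end Aux

theorem stmt8 (n : ℕ) (hn : Odd n) (a0 a1 a2 a3 : ZMod n → ZMod 2) (e0 e1 e2 : ZMod 2)
    (u : ZMod (2 * n) → ZMod 4) (hu : u = constructionI n a0 a1 a2 a3 e0 e1 e2)
    (h1 : ∀ τ0 : ℕ, 1 ≤ τ0 → τ0 < n →
      binCorr n a0 a0 (τ0 : ZMod n) + binCorr n a1 a1 (τ0 : ZMod n) +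
          binCorr n a2 a2 (τ0 : ZMod n) + binCorr n a3 a3 (τ0 : ZMod n) ∈
        ({0, 4, -4} : Set ℤ))
    (h2 : ∀ τ0 : ℕ, 1 ≤ τ0 → τ0 < n →
      binCorr n a0 a2 (τ0 : ZMod n) - binCorr n a2 a0 (τ0 : ZMod n) +
          (-1 : ℤ) ^ (e0 + e1 + e2).val *
            (binCorr n a1 a3 (τ0 : ZMod n) - binCorr n a3 a1 (τ0 : ZMod n)) = 0)
    (h3 : ∀ τ0 : ℕ, τ0 < n →
      binCorr n a0 a1 (τ0 : ZMod n) + binCorr n a1 a0 (τ0 : ZMod n) +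
          (-1 : ℤ) ^ (e0 + e1 + e2).val *
            (binCorr n a2 a3 (τ0 : ZMod n) + binCorr n a3 a2 (τ0 : ZMod n)) ∈
        ({0, 4, -4} : Set ℤ))
    (h4 : ∀ τ0 : ℕ, τ0 < n →
      binCorr n a0 a3 (τ0 : ZMod n) - binCorr n a3 a0 (τ0 : ZMod n) +
          (-1 : ℤ) ^ (e0 + e1 + e2).val *
            (binCorr n a1 a2 (τ0 : ZMod n) - binCorr n a2 a1 (τ0 : ZMod n)) = 0) :
    ∀ τ : ℕ, 1 ≤ τ → τ < 2 * n →
      quadCorr (2 * n) u u ((τ : ℕ) : ZMod (2 * n)) ∈ ({0, 2, -2} : Set ℂ)  := by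
  haveI : NeZero n := ⟨by obtain ⟨k, hk⟩ := hn; omega⟩
  intro τ hτ1 hτ2
  set lam : ZMod n := (((n + 1) / 2 : ℕ) : ZMod n) with hlam
  have h2lam : lam + lam = 1 := by
    have hnat : (n + 1) / 2 + (n + 1) / 2 = n + 1 := by obtain ⟨k, hk⟩ := hn; omega
    have hcast : ((((n + 1) / 2 + (n + 1) / 2 : ℕ)) : ZMod n) = ((n + 1 : ℕ) : ZMod n) := by
      rw [hnat]
    push_cast at hcast
    rw [hlam]
    rw [hcast, ZMod.natCast_self]
    ring
  have hC : u = fun i => grayInv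
      (interleaveSeq n a0 (fun i => e0 + a1 (i + lam)) i)
      (interleaveSeq n (fun i => e1 + a2 i) (fun i => e2 + a3 (i + lam)) i) := hu
  rw [hC, quadCorr_decomp]
  rcases Nat.even_or_odd τ with ⟨τ0, hτ⟩ | ⟨τ0, hτ⟩
  · -- even case
    rw [show τ = 2 * τ0 from by omega]
    have hτ0a : 1 ≤ τ0 := by omega
    have hτ0b : τ0 < n := by omega
    apply final_mem
    · -- real part
      simp only [binCorr_interleave_even, binCorr_const_left, binCorr_const_right,
        binCorr_shift_left, binCorr_shift_right]
      rw [show ((τ0 : ℕ) : ZMod n) + lam - lam = ((τ0 : ℕ) : ZMod n) from by ring]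
      refine Set.mem_of_eq_of_mem ?_ (h1 τ0 hτ0a hτ0b)
      linear_combination (binCorr n a1 a1 ((τ0 : ℕ) : ZMod n)) * neg_one_sq' e0.val
        + (binCorr n a2 a2 ((τ0 : ℕ) : ZMod n)) * neg_one_sq' e1.val
        + (binCorr n a3 a3 ((τ0 : ℕ) : ZMod n)) * neg_one_sq' e2.val
    · -- imaginary part
      simp only [binCorr_interleave_even, binCorr_const_left, binCorr_const_right,
        binCorr_shift_left, binCorr_shift_right]
      rw [show ((τ0 : ℕ) : ZMod n) + lam - lam = ((τ0 : ℕ) : ZMod n) from by ring]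
      linear_combination ((-1:ℤ) ^ e1.val) * h2 τ0 hτ0a hτ0b
        + (binCorr n a1 a3 ((τ0 : ℕ) : ZMod n)
            - binCorr n a3 a1 ((τ0 : ℕ) : ZMod n)) * sign_id02 e0 e1 e2
  · -- odd case
    rw [show τ = 2 * τ0 + 1 from by omega]
    have hτ0b : τ0 < n := by omega
    have hn0 : 0 < n := Nat.pos_of_ne_zero (NeZero.ne n)
    set t' : ℕ := (τ0 + (n + 1) / 2) % n with ht'
    have ht'n : t' < n := Nat.mod_lt _ hn0
    have ht'cast : ((t' : ℕ) : ZMod n) = ((τ0 : ℕ) : ZMod n) + lam := by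
      rw [ht', ZMod.natCast_mod]
      push_cast
      rw [hlam]
    have hh3 := h3 t' ht'n
    have hh4 := h4 t' ht'n
    rw [ht'cast] at hh3 hh4
    have hcast1 : ((τ0 + 1 : ℕ) : ZMod n) = ((τ0 : ℕ) : ZMod n) + 1 := by push_cast; ring
    have harg : ((τ0 : ℕ) : ZMod n) + 1 - lam = ((τ0 : ℕ) : ZMod n) + lam := by
      linear_combination -h2lam
    apply final_mem
    · -- real part
      simp only [binCorr_interleave_odd, binCorr_const_left, binCorr_const_right,
        binCorr_shift_left, binCorr_shift_right]
      rw [hcast1, harg]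
      refine Set.mem_of_eq_of_mem ?_ (mem_flip e0.val _ hh3)
      linear_combination (binCorr n a2 a3 (((τ0 : ℕ) : ZMod n) + lam)
          + binCorr n a3 a2 (((τ0 : ℕ) : ZMod n) + lam)) * sign_id12 e0 e1 e2
    · -- imaginary part
      simp only [binCorr_interleave_odd, binCorr_const_left, binCorr_const_right,
        binCorr_shift_left, binCorr_shift_right]
      rw [hcast1, harg]
      linear_combination ((-1:ℤ) ^ e2.val) * hh4
        + (binCorr n a1 a2 (((τ0 : ℕ) : ZMod n) + lam)
            - binCorr n a2 a1 (((τ0 : ℕ) : ZMod n) + lam)) * sign_id01 e0 e1 e2
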